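/- There exists an absolute constant K > 0 with the following property. Let m be a positive integer and let A be a 2m×2m complex matrix with all diagonal entries zero, regarded as a 2×2 block matrix (A_{ij})_{1≤i,j≤2} with blocks of size m×m. Suppose that for i = 1, 2 there exist an m×m diagonal matrix B_i with all diagonal entries in the square Q and an m×m matrix C_i such that A_{ii} = B_i C_i − C_i B_i and ‖C_i‖ ≤ c_i, where c_1, c_2 are positive reals with c_1/c_2 < 1/4. Then there exist a 2m×2m diagonal matrix B with all diagonal entries in Q and a 2m×2m matrix C such that A = BC − CB and ‖C‖ ≤ (1 + K·((c_1/c_2)^{1/2} + ‖A‖/c_1)) · c_2. -/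

import Mathlib

noncomputable def opNorm {ι κ : Type*} [Fintype ι] [Fintype κ] [DecidableEq κ]
    (A : Matrix ι κ ℂ) : ℝ :=
  ‖LinearMap.toContinuousLinearMap (Matrix.toEuclideanLin A)‖

def Qsq : Set ℂ := {z : ℂ | |z.re| ≤ 1 ∧ |z.im| ≤ 1}

open scoped Matrix.Norms.L2Operator

namespace StmtAux

lemma opNorm_eq {ι κ : Type*} [Fintype ι] [Fintype κ] [DecidableEq κ] (A : Matrix ι κ ℂ) :
    opNorm A = ‖A‖ := rfl

lemma mulVec_norm_le {ι κ : Type*} [Fintype ι] [Fintype κ] [DecidableEq κ]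
    (M : Matrix ι κ ℂ) (x : κ → ℂ) :
    Real.sqrt (∑ i, ‖M.mulVec x i‖ ^ 2) ≤ ‖M‖ * Real.sqrt (∑ j, ‖x j‖ ^ 2) := by
  have h := M.l2_opNorm_mulVec ((WithLp.equiv 2 (κ → ℂ)).symm x)
  simpa [EuclideanSpace.norm_eq] using h

lemma norm_le_of_mulVec {ι κ : Type*} [Fintype ι] [Fintype κ] [DecidableEq κ]
    (M : Matrix ι κ ℂ) {c : ℝ} (hc : 0 ≤ c)
    (h : ∀ x : κ → ℂ,
      Real.sqrt (∑ i, ‖M.mulVec x i‖ ^ 2) ≤ c * Real.sqrt (∑ j, ‖x j‖ ^ 2)) :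
    ‖M‖ ≤ c := by
  rw [Matrix.l2_opNorm_def]
  refine ContinuousLinearMap.opNorm_le_bound _ hc fun x => ?_
  have h' := h ((WithLp.equiv 2 (κ → ℂ)) x)
  simpa [EuclideanSpace.norm_eq] using h'

lemma norm_diagonal_le {ι : Type*} [Fintype ι] [DecidableEq ι] (v : ι → ℂ) {r : ℝ}
    (hr : 0 ≤ r) (h : ∀ i, ‖v i‖ ≤ r) : ‖Matrix.diagonal v‖ ≤ r := by
  refine norm_le_of_mulVec _ hr fun x => ?_
  have h1 : ∑ i, ‖(Matrix.diagonal v).mulVec x i‖ ^ 2 ≤ r ^ 2 * ∑ i, ‖x i‖ ^ 2 := by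
    rw [Finset.mul_sum]
    refine Finset.sum_le_sum fun i _ => ?_
    rw [Matrix.mulVec_diagonal, norm_mul, mul_pow]
    exact mul_le_mul_of_nonneg_right (pow_le_pow_left₀ (norm_nonneg _) (h i) 2) (by positivity)
  calc Real.sqrt (∑ i, ‖(Matrix.diagonal v).mulVec x i‖ ^ 2)
      ≤ Real.sqrt (r ^ 2 * ∑ i, ‖x i‖ ^ 2) := Real.sqrt_le_sqrt h1
    _ = r * Real.sqrt (∑ i, ‖x i‖ ^ 2) := by
        rw [Real.sqrt_mul (by positivity), Real.sqrt_sq hr]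

lemma norm_block_le {m : ℕ} (A : Matrix (Fin 2 × Fin m) (Fin 2 × Fin m) ℂ) (i j : Fin 2) :
    ‖(Matrix.of fun s t => A (i, s) (j, t) : Matrix (Fin m) (Fin m) ℂ)‖ ≤ ‖A‖ := by
  refine norm_le_of_mulVec _ (norm_nonneg A) fun x => ?_
  set u : Fin 2 × Fin m → ℂ := fun p => if p.1 = j then x p.2 else 0 with hu
  have hsum : ∑ p, ‖u p‖ ^ 2 = ∑ t, ‖x t‖ ^ 2 := by
    rw [Fintype.sum_prod_type]
    rw [Finset.sum_eq_single j]
    · simp [hu]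
    · intro k _ hk; simp [hu, hk]
    · simp
  have hv : ∀ s, (Matrix.of fun s t => A (i, s) (j, t) : Matrix (Fin m) (Fin m) ℂ).mulVec x s
      = A.mulVec u (i, s) := by
    intro s
    simp only [Matrix.mulVec, dotProduct, Matrix.of_apply, hu]
    rw [Fintype.sum_prod_type]
    rw [Finset.sum_eq_single j]
    · simp
    · intro k _ hk; simp [hk]
    · simp
  have hle : ∑ s, ‖A.mulVec u (i, s)‖ ^ 2 ≤ ∑ p, ‖A.mulVec u p‖ ^ 2 := by
    rw [Fintype.sum_prod_type]
    refine Finset.single_le_sum (f := fun k => ∑ s, ‖A.mulVec u (k, s)‖ ^ 2) ?_ (Finset.mem_univ i)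
    intro k _; positivity
  calc Real.sqrt (∑ s, ‖(Matrix.of fun s t => A (i, s) (j, t) :
        Matrix (Fin m) (Fin m) ℂ).mulVec x s‖ ^ 2)
      = Real.sqrt (∑ s, ‖A.mulVec u (i, s)‖ ^ 2) := by simp_rw [hv]
    _ ≤ Real.sqrt (∑ p, ‖A.mulVec u p‖ ^ 2) := Real.sqrt_le_sqrt hle
    _ ≤ ‖A‖ * Real.sqrt (∑ p, ‖u p‖ ^ 2) := mulVec_norm_le A u
    _ = ‖A‖ * Real.sqrt (∑ t, ‖x t‖ ^ 2) := by rw [hsum]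

lemma norm_embed_le {m : ℕ} (M : Matrix (Fin m) (Fin m) ℂ) (i j : Fin 2) :
    ‖(Matrix.of fun p q => if p.1 = i ∧ q.1 = j then M p.2 q.2 else 0 :
        Matrix (Fin 2 × Fin m) (Fin 2 × Fin m) ℂ)‖ ≤ ‖M‖ := by
  refine norm_le_of_mulVec _ (norm_nonneg M) fun x => ?_
  set w : Fin m → ℂ := fun t => x (j, t) with hw
  have key : ∀ p : Fin 2 × Fin m,
      (Matrix.of fun p q => if p.1 = i ∧ q.1 = j then M p.2 q.2 else 0 :
        Matrix (Fin 2 × Fin m) (Fin 2 × Fin m) ℂ).mulVec x p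
      = if p.1 = i then M.mulVec w p.2 else 0 := by
    intro p
    simp only [Matrix.mulVec, dotProduct, Matrix.of_apply]
    by_cases hp : p.1 = i
    · simp only [hp, if_pos, true_and]
      rw [Fintype.sum_prod_type]
      rw [Finset.sum_eq_single j]
      · simp [hw]
      · intro k _ hk; simp [hk]
      · simp
    · simp [hp]
  have h1 : ∑ p, ‖(Matrix.of fun p q => if p.1 = i ∧ q.1 = j then M p.2 q.2 else 0 :
        Matrix (Fin 2 × Fin m) (Fin 2 × Fin m) ℂ).mulVec x p‖ ^ 2
      = ∑ s, ‖M.mulVec w s‖ ^ 2 := by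
    simp_rw [key]
    rw [Fintype.sum_prod_type]
    rw [Finset.sum_eq_single i]
    · simp
    · intro k _ hk; simp [hk]
    · simp
  have h2 : ∑ t, ‖w t‖ ^ 2 ≤ ∑ p, ‖x p‖ ^ 2 := by
    rw [Fintype.sum_prod_type]
    calc ∑ t, ‖w t‖ ^ 2 = ∑ t, ‖x (j, t)‖ ^ 2 := rfl
      _ ≤ ∑ k, ∑ t, ‖x (k, t)‖ ^ 2 :=
        Finset.single_le_sum (f := fun k => ∑ t, ‖x (k, t)‖ ^ 2)
          (fun k _ => by positivity) (Finset.mem_univ j)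
  calc Real.sqrt (∑ p, ‖_‖ ^ 2) = Real.sqrt (∑ s, ‖M.mulVec w s‖ ^ 2) := by rw [h1]
    _ ≤ ‖M‖ * Real.sqrt (∑ t, ‖w t‖ ^ 2) := mulVec_norm_le M w
    _ ≤ ‖M‖ * Real.sqrt (∑ p, ‖x p‖ ^ 2) :=
        mul_le_mul_of_nonneg_left (Real.sqrt_le_sqrt h2) (norm_nonneg M)

lemma sylvester_small_left {m : ℕ} (u v : Fin m → ℂ) {r R : ℝ} (hr : 0 ≤ r) (hrR : r < R)
    (hu : ∀ s, ‖u s‖ ≤ r) (hv : ∀ t, R ≤ ‖v t‖) (A : Matrix (Fin m) (Fin m) ℂ) :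
    ‖(Matrix.of fun s t => A s t / (u s - v t) : Matrix (Fin m) (Fin m) ℂ)‖ ≤ ‖A‖ / (R - r) := by
  have hR : 0 < R := lt_of_le_of_lt hr hrR
  have hvne : ∀ t, v t ≠ 0 := fun t => by
    intro h0; have := hv t; rw [h0, norm_zero] at this; linarith
  have hne : ∀ s t, u s - v t ≠ 0 := by
    intro s t h0
    rw [sub_eq_zero] at h0
    have h1 := hu s; have h2 := hv t; rw [h0] at h1; linarith
  set X := (Matrix.of fun s t => A s t / (u s - v t) : Matrix (Fin m) (Fin m) ℂ) with hX
  have key : X = (Matrix.diagonal u * X - A) * Matrix.diagonal (fun t => (v t)⁻¹) := by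
    ext s t
    simp only [hX, Matrix.mul_diagonal, Matrix.sub_apply, Matrix.diagonal_mul, Matrix.of_apply]
    have h1 := hne s t
    have h2 := hvne t
    field_simp
    ring
  have hinv : ‖Matrix.diagonal (fun t => (v t)⁻¹)‖ ≤ R⁻¹ := by
    refine norm_diagonal_le _ (by positivity) fun t => ?_
    rw [norm_inv]
    exact inv_anti₀ hR (hv t)
  have hdu : ‖Matrix.diagonal u‖ ≤ r := norm_diagonal_le _ hr hu
  have h1 : ‖X‖ ≤ (r * ‖X‖ + ‖A‖) * R⁻¹ := by
    calc ‖X‖ = ‖(Matrix.diagonal u * X - A) * Matrix.diagonal (fun t => (v t)⁻¹)‖ := by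
          rw [← key]
      _ ≤ ‖Matrix.diagonal u * X - A‖ * ‖Matrix.diagonal (fun t => (v t)⁻¹)‖ :=
          Matrix.l2_opNorm_mul _ _
      _ ≤ (r * ‖X‖ + ‖A‖) * R⁻¹ := by
          refine mul_le_mul ?_ hinv (norm_nonneg _) (by positivity)
          calc ‖Matrix.diagonal u * X - A‖ ≤ ‖Matrix.diagonal u * X‖ + ‖A‖ := norm_sub_le _ _
            _ ≤ r * ‖X‖ + ‖A‖ := by
                have := Matrix.l2_opNorm_mul (Matrix.diagonal u) X
                have h2 : ‖Matrix.diagonal u‖ * ‖X‖ ≤ r * ‖X‖ :=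
                  mul_le_mul_of_nonneg_right hdu (norm_nonneg _)
                linarith
  rw [le_div_iff₀ (by linarith)]
  have h2 : ‖X‖ * R ≤ r * ‖X‖ + ‖A‖ := by
    have h3 := mul_le_mul_of_nonneg_right h1 hR.le
    rwa [mul_assoc, inv_mul_cancel₀ (ne_of_gt hR), mul_one] at h3
  nlinarith [norm_nonneg X]

lemma sylvester_big_left {m : ℕ} (u v : Fin m → ℂ) {r R : ℝ} (hr : 0 ≤ r) (hrR : r < R)
    (hu : ∀ s, R ≤ ‖u s‖) (hv : ∀ t, ‖v t‖ ≤ r) (A : Matrix (Fin m) (Fin m) ℂ) :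
    ‖(Matrix.of fun s t => A s t / (u s - v t) : Matrix (Fin m) (Fin m) ℂ)‖ ≤ ‖A‖ / (R - r) := by
  have hR : 0 < R := lt_of_le_of_lt hr hrR
  have hune : ∀ s, u s ≠ 0 := fun s => by
    intro h0; have := hu s; rw [h0, norm_zero] at this; linarith
  have hne : ∀ s t, u s - v t ≠ 0 := by
    intro s t h0
    rw [sub_eq_zero] at h0
    have h1 := hu s; have h2 := hv t; rw [h0] at h1; linarith
  set X := (Matrix.of fun s t => A s t / (u s - v t) : Matrix (Fin m) (Fin m) ℂ) with hX
  have key : X = Matrix.diagonal (fun s => (u s)⁻¹) * (A + X * Matrix.diagonal v) := by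
    ext s t
    simp only [hX, Matrix.diagonal_mul, Matrix.add_apply, Matrix.mul_diagonal, Matrix.of_apply]
    have h1 := hne s t
    have h2 := hune s
    field_simp
    ring
  have hinv : ‖Matrix.diagonal (fun s => (u s)⁻¹)‖ ≤ R⁻¹ := by
    refine norm_diagonal_le _ (by positivity) fun s => ?_
    rw [norm_inv]
    exact inv_anti₀ hR (hu s)
  have hdv : ‖Matrix.diagonal v‖ ≤ r := norm_diagonal_le _ hr hv
  have h1 : ‖X‖ ≤ R⁻¹ * (‖A‖ + ‖X‖ * r) := by
    calc ‖X‖ = ‖Matrix.diagonal (fun s => (u s)⁻¹) * (A + X * Matrix.diagonal v)‖ := by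
          rw [← key]
      _ ≤ ‖Matrix.diagonal (fun s => (u s)⁻¹)‖ * ‖A + X * Matrix.diagonal v‖ :=
          Matrix.l2_opNorm_mul _ _
      _ ≤ R⁻¹ * (‖A‖ + ‖X‖ * r) := by
          refine mul_le_mul hinv ?_ (norm_nonneg _) (by positivity)
          calc ‖A + X * Matrix.diagonal v‖ ≤ ‖A‖ + ‖X * Matrix.diagonal v‖ := norm_add_le _ _
            _ ≤ ‖A‖ + ‖X‖ * r := by
                have := Matrix.l2_opNorm_mul X (Matrix.diagonal v)
                have h2 : ‖X‖ * ‖Matrix.diagonal v‖ ≤ ‖X‖ * r :=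
                  mul_le_mul_of_nonneg_left hdv (norm_nonneg _)
                linarith
  rw [le_div_iff₀ (by linarith)]
  have h2 : R * ‖X‖ ≤ ‖A‖ + ‖X‖ * r := by
    have h3 := mul_le_mul_of_nonneg_left h1 hR.le
    rwa [← mul_assoc, mul_inv_cancel₀ (ne_of_gt hR), one_mul] at h3
  nlinarith [norm_nonneg X]

lemma comm_div (x y D a : ℂ) (hD : x - y = D) (h : D ≠ 0) :
    a = x * (a / D) - (a / D) * y := by
  subst hD
  field_simp

lemma norm_le_sqrt_two_of_mem_Qsq {z : ℂ} (hz : z ∈ Qsq) : ‖z‖ ≤ Real.sqrt 2 := by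
  obtain ⟨h1, h2⟩ := hz
  have hre := abs_le.1 h1
  have him := abs_le.1 h2
  have habs : ‖z‖ ^ 2 ≤ 2 := by
    rw [Complex.sq_norm, Complex.normSq_apply]
    nlinarith
  calc ‖z‖ = Real.sqrt (‖z‖ ^ 2) :=
        (Real.sqrt_sq (norm_nonneg z)).symm
    _ ≤ Real.sqrt 2 := Real.sqrt_le_sqrt habs

end StmtAux

set_option maxHeartbeats 1000000 in
open StmtAux in
/-- There is an absolute K > 0 such that: if a zero-diagonal 2m×2m matrix A has its two
diagonal m×m blocks of the form [Bᵢ, Cᵢ] with Bᵢ diagonal with entries in Q and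
‖Cᵢ‖ ≤ cᵢ, where 0 < c₁, 0 < c₂ and c₁/c₂ < 1/4, then A = [B, C] with B diagonal with
entries in Q and ‖C‖ ≤ (1 + K·((c₁/c₂)^{1/2} + ‖A‖/c₁)) · c₂. -/
theorem stmt6 :
    ∃ K : ℝ, 0 < K ∧ ∀ (m : ℕ), 0 < m →
      ∀ (c₁ c₂ : ℝ), 0 < c₁ → 0 < c₂ → c₁ / c₂ < 1 / 4 →
      ∀ A : Matrix (Fin 2 × Fin m) (Fin 2 × Fin m) ℂ,
        (∀ p, A p p = 0) →
        (∃ (d₁ : Fin m → ℂ) (C₁ : Matrix (Fin m) (Fin m) ℂ),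
          (∀ s, d₁ s ∈ Qsq) ∧
          (Matrix.of fun s t => A (0, s) (0, t)) =
            Matrix.diagonal d₁ * C₁ - C₁ * Matrix.diagonal d₁ ∧
          opNorm C₁ ≤ c₁) →
        (∃ (d₂ : Fin m → ℂ) (C₂ : Matrix (Fin m) (Fin m) ℂ),
          (∀ s, d₂ s ∈ Qsq) ∧
          (Matrix.of fun s t => A (1, s) (1, t)) =
            Matrix.diagonal d₂ * C₂ - C₂ * Matrix.diagonal d₂ ∧
          opNorm C₂ ≤ c₂) →
        ∃ (d : Fin 2 × Fin m → ℂ) (C : Matrix (Fin 2 × Fin m) (Fin 2 × Fin m) ℂ),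
          (∀ p, d p ∈ Qsq) ∧
          A = Matrix.diagonal d * C - C * Matrix.diagonal d ∧
          opNorm C ≤ (1 + K * (Real.sqrt (c₁ / c₂) + opNorm A / c₁)) * c₂ := by
  refine ⟨20, by norm_num, ?_⟩
  intro m hm c₁ c₂ hc₁ hc₂ hcc A hdiag h₁ h₂
  obtain ⟨d₁, C₁, hd₁, hA₁, hC₁⟩ := h₁
  obtain ⟨d₂, C₂, hd₂, hA₂, hC₂⟩ := h₂
  rw [opNorm_eq] at hC₁ hC₂
  have hsqrt2 : Real.sqrt 2 < 3/2 := by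
    nlinarith [Real.sq_sqrt (by norm_num : (0:ℝ) ≤ 2), Real.sqrt_nonneg 2]
  have hsqrt2' : (0:ℝ) ≤ Real.sqrt 2 := Real.sqrt_nonneg 2
  set σ := Real.sqrt (c₁ / c₂) with hσdef
  have hσ0 : 0 < σ := Real.sqrt_pos.mpr (div_pos hc₁ hc₂)
  have hσsq : σ ^ 2 = c₁ / c₂ := Real.sq_sqrt (le_of_lt (div_pos hc₁ hc₂))
  have hσhalf : σ < 1/2 := by nlinarith
  obtain ⟨l, hσl, hl0, hl4⟩ : ∃ l : ℝ, σ = 2 * l ∧ 0 < l ∧ l < 1 / 4 :=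
    ⟨σ / 2, by ring, by positivity, by linarith⟩
  have hlne : ((l : ℝ) : ℂ) ≠ 0 := Complex.ofReal_ne_zero.mpr (ne_of_gt hl0)
  have h3l : (0:ℝ) < 1 - 3 * l := by linarith
  have h3lne : ((1 - 3 * l : ℝ) : ℂ) ≠ 0 := Complex.ofReal_ne_zero.mpr (ne_of_gt h3l)
  have hc₁eq : c₁ = 4 * l ^ 2 * c₂ := by
    have h : (2 * l) ^ 2 = c₁ / c₂ := hσl ▸ hσsq
    rw [eq_div_iff (ne_of_gt hc₂)] at h
    nlinarith [h]
  -- the scaled diagonals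
  set u : Fin m → ℂ := fun t => ((l : ℝ) : ℂ) * d₁ t with hudef
  set v : Fin m → ℂ := fun t => ((1 - 3 * l : ℝ) : ℂ) * d₂ t
      + ((1 - l : ℝ) : ℂ) * (1 + Complex.I) with hvdef
  have hu_le : ∀ t, ‖u t‖ ≤ Real.sqrt 2 * l := by
    intro t
    rw [hudef]
    simp only []
    rw [norm_mul, Complex.norm_real, Real.norm_eq_abs,
      abs_of_pos hl0]
    rw [mul_comm]
    exact mul_le_mul_of_nonneg_right
      (by exact norm_le_sqrt_two_of_mem_Qsq (hd₁ t)) hl0.le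
  have hv_re : ∀ t, 2 * l ≤ (v t).re := by
    intro t
    have h := abs_le.1 (hd₂ t).1
    simp only [hvdef, Complex.add_re, Complex.mul_re, Complex.ofReal_re, Complex.ofReal_im,
      Complex.add_re, Complex.one_re, Complex.I_re, Complex.add_im, Complex.one_im,
      Complex.I_im]
    nlinarith [h.1, h.2]
  have hv_ge : ∀ t, 2 * l ≤ ‖v t‖ := by
    intro t
    calc 2 * l ≤ (v t).re := hv_re t
      _ ≤ ‖v t‖ := Complex.re_le_norm _
      _ = ‖v t‖ := rfl
  have hrR : Real.sqrt 2 * l < 2 * l := by nlinarith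
  have hne : ∀ s t, u s - v t ≠ 0 := by
    intro s t h0
    rw [sub_eq_zero] at h0
    have h1 := hu_le s
    have h2 := hv_ge t
    rw [h0] at h1
    linarith
  have hne' : ∀ s t, v t - u s ≠ 0 := by
    intro s t h0
    rw [sub_eq_zero] at h0
    exact hne s t (by rw [h0, sub_self])
  -- entrywise forms of the block hypotheses
  have hE₁ : ∀ s t, A (0, s) (0, t) = d₁ s * C₁ s t - C₁ s t * d₁ t := by
    intro s t
    have h := Matrix.ext_iff.mpr hA₁ s t
    simpa [Matrix.sub_apply, Matrix.diagonal_mul, Matrix.mul_diagonal] using h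
  have hE₂ : ∀ s t, A (1, s) (1, t) = d₂ s * C₂ s t - C₂ s t * d₂ t := by
    intro s t
    have h := Matrix.ext_iff.mpr hA₂ s t
    simpa [Matrix.sub_apply, Matrix.diagonal_mul, Matrix.mul_diagonal] using h
  -- the new diagonal and commutant
  set p₀ : ℂ := -(((1 - l : ℝ) : ℂ) * (1 + Complex.I)) with hp₀def
  set d : Fin 2 × Fin m → ℂ := fun p => (if p.1 = 0 then u p.2 else v p.2) + p₀ with hddef
  set A01 : Matrix (Fin m) (Fin m) ℂ := Matrix.of fun s t => A (0, s) (1, t) with hA01def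
  set A10 : Matrix (Fin m) (Fin m) ℂ := Matrix.of fun s t => A (1, s) (0, t) with hA10def
  set M00 : Matrix (Fin m) (Fin m) ℂ := ((l⁻¹ : ℝ) : ℂ) • C₁ with hM00def
  set M11 : Matrix (Fin m) (Fin m) ℂ := (((1 - 3 * l)⁻¹ : ℝ) : ℂ) • C₂ with hM11def
  set M01 : Matrix (Fin m) (Fin m) ℂ := Matrix.of fun s t => A01 s t / (u s - v t) with hM01def
  set M10 : Matrix (Fin m) (Fin m) ℂ := Matrix.of fun s t => A10 s t / (v s - u t) with hM10def
  set C : Matrix (Fin 2 × Fin m) (Fin 2 × Fin m) ℂ := Matrix.of fun p q =>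
    if p.1 = 0 then (if q.1 = 0 then M00 p.2 q.2 else M01 p.2 q.2)
    else (if q.1 = 0 then M10 p.2 q.2 else M11 p.2 q.2) with hCdef
  have hi2 : ∀ i : Fin 2, i = 0 ∨ i = 1 := by decide
  have hd0 : ∀ t, d (0, t) = ((l : ℝ) : ℂ) * d₁ t - ((1 - l : ℝ) : ℂ) * (1 + Complex.I) := by
    intro t
    simp only [hddef, hudef, hp₀def]
    push_cast
    ring
  have hd1 : ∀ t, d (1, t) = ((1 - 3 * l : ℝ) : ℂ) * d₂ t := by
    intro t
    have : ((1 : Fin 2) = 0) = False := by decide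
    simp only [hddef, hvdef, hp₀def, this, if_false]
    push_cast
    ring
  refine ⟨d, C, ?_, ?_, ?_⟩
  · -- membership in Qsq
    rintro ⟨i, t⟩
    rcases hi2 i with rfl | rfl
    · have h := abs_le.1 (hd₁ t).1
      have h' := abs_le.1 (hd₁ t).2
      have hre : (d (0, t)).re = l * (d₁ t).re - (1 - l) := by
        rw [hd0]; simp [Complex.sub_re, Complex.mul_re]
      have him : (d (0, t)).im = l * (d₁ t).im - (1 - l) := by
        rw [hd0]; simp [Complex.sub_im, Complex.mul_im]
      refine ⟨?_, ?_⟩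
      · rw [hre, abs_le]; constructor <;> nlinarith
      · rw [him, abs_le]; constructor <;> nlinarith
    · have h := abs_le.1 (hd₂ t).1
      have h' := abs_le.1 (hd₂ t).2
      have hre : (d (1, t)).re = (1 - 3 * l) * (d₂ t).re := by
        rw [hd1]; simp [Complex.mul_re]
      have him : (d (1, t)).im = (1 - 3 * l) * (d₂ t).im := by
        rw [hd1]; simp [Complex.mul_im]
      refine ⟨?_, ?_⟩
      · rw [hre, abs_le]; constructor <;> nlinarith
      · rw [him, abs_le]; constructor <;> nlinarith
  · -- the commutator identity
    ext p q
    obtain ⟨i, s⟩ := p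
    obtain ⟨j, t⟩ := q
    rw [Matrix.sub_apply, Matrix.diagonal_mul, Matrix.mul_diagonal]
    have hC00 : ∀ s t, C (0, s) (0, t) = ((l⁻¹ : ℝ) : ℂ) * C₁ s t := by
      intro s t; simp [hCdef, hM00def]
    have hC01 : ∀ s t, C (0, s) (1, t) = A (0, s) (1, t) / (u s - v t) := by
      intro s t; simp [hCdef, hM01def, hA01def]
    have hC10 : ∀ s t, C (1, s) (0, t) = A (1, s) (0, t) / (v s - u t) := by
      intro s t; simp [hCdef, hM10def, hA10def]
    have hC11 : ∀ s t, C (1, s) (1, t) = (((1 - 3 * l)⁻¹ : ℝ) : ℂ) * C₂ s t := by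
      intro s t; simp [hCdef, hM11def]
    rcases hi2 i with rfl | rfl <;> rcases hi2 j with rfl | rfl
    · rw [hC00, hd0, hd0, hE₁ s t, Complex.ofReal_inv]
      have hlc : ((l : ℝ) : ℂ) ≠ 0 := hlne
      push_cast
      field_simp [hlc]
      ring
    · rw [hC01]
      have hdd : d (0, s) - d (1, t) = u s - v t := by
        simp only [hddef, hudef, hvdef, hp₀def]
        norm_num
        ring
      exact comm_div _ _ _ _ hdd (hne s t)
    · rw [hC10]
      have hdd : d (1, s) - d (0, t) = v s - u t := by
        simp only [hddef, hudef, hvdef, hp₀def]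
        norm_num
        ring
      exact comm_div _ _ _ _ hdd (hne' t s)
    · rw [hC11, hd1, hd1, hE₂ s t, Complex.ofReal_inv]
      have h3c : (1 : ℂ) - 3 * ((l : ℝ) : ℂ) ≠ 0 := by
        intro h
        apply h3lne
        push_cast
        linear_combination h
      push_cast
      field_simp [h3c]
  · -- the norm bound
    rw [opNorm_eq, opNorm_eq]
    have hsplit : C = (Matrix.of fun p q => if p.1 = 0 ∧ q.1 = 0 then M00 p.2 q.2 else 0)
        + (Matrix.of fun p q => if p.1 = 0 ∧ q.1 = 1 then M01 p.2 q.2 else 0)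
        + (Matrix.of fun p q => if p.1 = 1 ∧ q.1 = 0 then M10 p.2 q.2 else 0)
        + (Matrix.of fun p q => if p.1 = 1 ∧ q.1 = 1 then M11 p.2 q.2 else 0) := by
      ext p q
      obtain ⟨i, s⟩ := p
      obtain ⟨j, t⟩ := q
      rcases hi2 i with rfl | rfl <;> rcases hi2 j with rfl | rfl <;>
        simp [hCdef, Matrix.add_apply]
    have hnorm : ‖C‖ ≤ ‖M00‖ + ‖M01‖ + ‖M10‖ + ‖M11‖ := by
      rw [hsplit]
      have t1 := norm_embed_le M00 0 0
      have t2 := norm_embed_le M01 0 1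
      have t3 := norm_embed_le M10 1 0
      have t4 := norm_embed_le M11 1 1
      have n1 := norm_add_le ((Matrix.of fun p q => if p.1 = 0 ∧ q.1 = 0 then M00 p.2 q.2 else 0 :
        Matrix (Fin 2 × Fin m) (Fin 2 × Fin m) ℂ)
        + (Matrix.of fun p q => if p.1 = 0 ∧ q.1 = 1 then M01 p.2 q.2 else 0)
        + (Matrix.of fun p q => if p.1 = 1 ∧ q.1 = 0 then M10 p.2 q.2 else 0))
        (Matrix.of fun p q => if p.1 = 1 ∧ q.1 = 1 then M11 p.2 q.2 else 0)
      have n2 := norm_add_le ((Matrix.of fun p q => if p.1 = 0 ∧ q.1 = 0 then M00 p.2 q.2 else 0 :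
        Matrix (Fin 2 × Fin m) (Fin 2 × Fin m) ℂ)
        + (Matrix.of fun p q => if p.1 = 0 ∧ q.1 = 1 then M01 p.2 q.2 else 0))
        (Matrix.of fun p q => if p.1 = 1 ∧ q.1 = 0 then M10 p.2 q.2 else 0)
      have n3 := norm_add_le (Matrix.of fun p q => if p.1 = 0 ∧ q.1 = 0 then M00 p.2 q.2 else 0 :
        Matrix (Fin 2 × Fin m) (Fin 2 × Fin m) ℂ)
        (Matrix.of fun p q => if p.1 = 0 ∧ q.1 = 1 then M01 p.2 q.2 else 0)
      linarith
    have h00 : ‖M00‖ ≤ l⁻¹ * c₁ := by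
      rw [hM00def, norm_smul]
      have he : ‖((l⁻¹ : ℝ) : ℂ)‖ = l⁻¹ := by
        rw [Complex.norm_real, Real.norm_eq_abs, abs_of_pos (by positivity)]
      rw [he]
      exact mul_le_mul_of_nonneg_left hC₁ (by positivity)
    have h11 : ‖M11‖ ≤ (1 - 3 * l)⁻¹ * c₂ := by
      rw [hM11def, norm_smul]
      have he : ‖(((1 - 3 * l)⁻¹ : ℝ) : ℂ)‖ = (1 - 3 * l)⁻¹ := by
        rw [Complex.norm_real, Real.norm_eq_abs, abs_of_pos (by positivity)]
      rw [he]
      exact mul_le_mul_of_nonneg_left hC₂ (by positivity)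
    have hden : (0:ℝ) < 2 * l - Real.sqrt 2 * l := by nlinarith
    have h01 : ‖M01‖ ≤ ‖A‖ / (2 * l - Real.sqrt 2 * l) := by
      rw [hM01def]
      refine le_trans (sylvester_small_left u v (by positivity) hrR hu_le hv_ge A01) ?_
      refine (div_le_div_iff_of_pos_right hden).mpr ?_
      rw [hA01def]
      exact norm_block_le A 0 1
    have h10 : ‖M10‖ ≤ ‖A‖ / (2 * l - Real.sqrt 2 * l) := by
      rw [hM10def]
      refine le_trans (sylvester_big_left v u (by positivity) hrR hv_ge hu_le A10) ?_
      refine (div_le_div_iff_of_pos_right hden).mpr ?_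
      rw [hA10def]
      exact norm_block_le A 1 0
    have hA0 : (0:ℝ) ≤ ‖A‖ := norm_nonneg A
    have h01' : ‖A‖ / (2 * l - Real.sqrt 2 * l) ≤ 2 * ‖A‖ / l := by
      rw [div_le_div_iff₀ hden hl0]
      have h32 : (0:ℝ) ≤ 3 - 2 * Real.sqrt 2 := by linarith
      nlinarith [mul_nonneg (mul_nonneg hA0 hl0.le) h32]
    have e1 : l⁻¹ * c₁ = 4 * l * c₂ := by
      rw [hc₁eq]
      field_simp
    have e2 : (1 - 3 * l)⁻¹ * c₂ ≤ (1 + 12 * l) * c₂ := by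
      refine mul_le_mul_of_nonneg_right ?_ hc₂.le
      rw [inv_eq_one_div, div_le_iff₀ h3l]
      nlinarith
    have e4 : 2 * (2 * ‖A‖ / l) ≤ 5 * (‖A‖ / l ^ 2) := by
      have : 4 * ‖A‖ / l ≤ 5 * ‖A‖ / l ^ 2 := by
        rw [div_le_div_iff₀ hl0 (by positivity)]
        nlinarith [mul_nonneg hA0 hl0.le, mul_nonneg (mul_nonneg hA0 hl0.le) hl0.le,
          mul_le_mul_of_nonneg_left hl4.le (mul_nonneg hA0 hl0.le)]
      calc 2 * (2 * ‖A‖ / l) = 4 * ‖A‖ / l := by ring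
        _ ≤ 5 * ‖A‖ / l ^ 2 := this
        _ = 5 * (‖A‖ / l ^ 2) := by ring
    have htarget : (1 + 20 * (σ + ‖A‖ / c₁)) * c₂ = c₂ + 40 * l * c₂ + 5 * (‖A‖ / l ^ 2) := by
      rw [hσl, hc₁eq]
      field_simp
      ring
    rw [htarget]
    have hl2 : 0 ≤ l * c₂ := by positivity
    linarith
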